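/- Let G be a finitely generated group, μ a probability measure on G whose support generates G as a semigroup, with spectral radius ρ(μ) < 1 (e.g. G nonamenable). Then there exist 0 < φ < 1 and D > 0 such that for all x, y ∈ G and all M ∈ ℕ, the total weight of admissible trajectories from x to y of length at least M is at most φ^{M − D·d(x,y)} · 𝒢(x,y). -/

import Mathlib

open scoped Classical

/-- `n`-fold convolution power of a measure `μ` on a countable group:
`p^n(x,y) = μ^{*n}(x⁻¹y)` is `convPow μ n (x⁻¹ * y)`. -/
noncomputable def convPow {G : Type*} [Group G] (μ : G → ℝ) : ℕ → G → ℝ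
  | 0 => fun g => if g = 1 then 1 else 0
  | n + 1 => fun g => ∑' h : G, μ h * convPow μ n (h⁻¹ * g)

/-- Green's function `𝒢(x,y) = ∑_{n ≥ 0} μ^{*n}(x⁻¹ y)`. -/
noncomputable def green {G : Type*} [Group G] (μ : G → ℝ) (x y : G) : ℝ :=
  ∑' n : ℕ, convPow μ n (x⁻¹ * y)

/-- Word distance with respect to a generating set `S`. -/
noncomputable def wordDist {G : Type*} [Group G] (S : Set G) (x y : G) : ℕ :=
  sInf {n : ℕ | ∃ l : List G, l.length = n ∧ (∀ a ∈ l, a ∈ S) ∧ l.prod = x⁻¹ * y}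

section Aux

set_option linter.unusedSectionVars false
set_option linter.unusedVariables false

variable {G : Type*} [Group G] [Countable G] {μ : G → ℝ} {t : ℝ}

private lemma convPow_nonneg (hμ0 : ∀ g, 0 ≤ μ g) : ∀ n g, 0 ≤ convPow μ n g := by
  intro n
  induction n with
  | zero => intro g; simp only [convPow]; split <;> norm_num
  | succ n ih =>
    intro g
    exact tsum_nonneg fun h => mul_nonneg (hμ0 h) (ih _)

private lemma convPow_le_one (hμ0 : ∀ g, 0 ≤ μ g) (hμ1 : HasSum μ 1) :
    ∀ n g, convPow μ n g ≤ 1 := by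
  intro n
  induction n with
  | zero => intro g; simp only [convPow]; split <;> norm_num
  | succ n ih =>
    intro g
    have hsummable : Summable (fun h => μ h * convPow μ n (h⁻¹ * g)) :=
      Summable.of_nonneg_of_le (fun h => mul_nonneg (hμ0 h) (convPow_nonneg hμ0 _ _))
        (fun h => mul_le_of_le_one_right (hμ0 h) (ih _)) hμ1.summable
    calc convPow μ (n+1) g = ∑' h, μ h * convPow μ n (h⁻¹ * g) := rfl
    _ ≤ ∑' h, μ h := Summable.tsum_le_tsum (fun h => mul_le_of_le_one_right (hμ0 h) (ih _))
        hsummable hμ1.summable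
    _ = 1 := hμ1.tsum_eq

private lemma summable_kernel (hμ0 : ∀ g, 0 ≤ μ g) (hμ1 : HasSum μ 1) (n : ℕ) (g : G) :
    Summable (fun h => μ h * convPow μ n (h⁻¹ * g)) :=
  Summable.of_nonneg_of_le (fun h => mul_nonneg (hμ0 h) (convPow_nonneg hμ0 _ _))
    (fun h => mul_le_of_le_one_right (hμ0 h) (convPow_le_one hμ0 hμ1 _ _)) hμ1.summable

private lemma convPow_one_eq (μ : G → ℝ) (g : G) : convPow μ 1 g = μ g := by
  have h : ∀ h : G, μ h * convPow μ 0 (h⁻¹ * g) = if h = g then μ g else 0 := by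
    intro h
    by_cases hh : h = g
    · subst hh; simp [convPow]
    · have : h⁻¹ * g ≠ 1 := by
        rw [Ne, inv_mul_eq_one]; exact hh
      simp [convPow, this, hh]
  calc convPow μ 1 g = ∑' h : G, μ h * convPow μ 0 (h⁻¹ * g) := rfl
  _ = ∑' h : G, if h = g then μ g else 0 := by rw [tsum_congr h]
  _ = μ g := tsum_ite_eq g (fun _ => μ g)

private lemma convPow_mul_le (hμ0 : ∀ g, 0 ≤ μ g) (hμ1 : HasSum μ 1) :
    ∀ (m n : ℕ) (h k : G), convPow μ m h * convPow μ n k ≤ convPow μ (m + n) (h * k) := by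
  intro m
  induction m with
  | zero =>
    intro n h k
    by_cases hh : h = 1
    · subst hh
      simp [convPow]
    · have : convPow μ 0 h = 0 := by simp [convPow, hh]
      rw [this, zero_mul, zero_add]
      exact convPow_nonneg hμ0 _ _
  | succ m ih =>
    intro n h k
    have e1 : convPow μ (m + 1) h * convPow μ n k
        = ∑' u : G, μ u * convPow μ m (u⁻¹ * h) * convPow μ n k := by
      rw [show convPow μ (m+1) h = ∑' u : G, μ u * convPow μ m (u⁻¹ * h) from rfl,
        ← tsum_mul_right]
    have e2 : convPow μ (m + 1 + n) (h * k)
        = ∑' u : G, μ u * convPow μ (m + n) (u⁻¹ * (h * k)) := by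
      rw [show m + 1 + n = m + n + 1 by omega]; rfl
    rw [e1, e2]
    refine Summable.tsum_le_tsum (fun u => ?_) ((summable_kernel hμ0 hμ1 m h).mul_right _)
      (summable_kernel hμ0 hμ1 (m+n) (h*k))
    rw [mul_assoc]
    refine mul_le_mul_of_nonneg_left ?_ (hμ0 u)
    calc convPow μ m (u⁻¹ * h) * convPow μ n k ≤ convPow μ (m+n) (u⁻¹ * h * k) := ih n _ k
    _ = convPow μ (m+n) (u⁻¹ * (h * k)) := by rw [mul_assoc]

private lemma convPow_exists_pos (hμ0 : ∀ g, 0 ≤ μ g) (hμ1 : HasSum μ 1)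
    (hgen : Subsemigroup.closure {g : G | 0 < μ g} = ⊤) (g : G) :
    ∃ n : ℕ, 0 < convPow μ n g := by
  have hg : g ∈ Subsemigroup.closure {g : G | 0 < μ g} := by rw [hgen]; trivial
  refine Subsemigroup.closure_induction (p := fun x _ => ∃ n : ℕ, 0 < convPow μ n x)
    ?_ ?_ hg
  · intro x hx
    exact ⟨1, by rw [convPow_one_eq]; exact hx⟩
  · rintro x y _ _ ⟨nx, hx⟩ ⟨ny, hy⟩
    exact ⟨nx + ny, lt_of_lt_of_le (mul_pos hx hy) (convPow_mul_le hμ0 hμ1 nx ny x y)⟩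

private lemma exists_c0 (hμ0 : ∀ g, 0 ≤ μ g) (hμ1 : HasSum μ 1)
    (hgen : Subsemigroup.closure {g : G | 0 < μ g} = ⊤) (S : Finset G) :
    ∃ c0 : ℝ, 0 < c0 ∧ c0 ≤ 1 ∧ ∀ s ∈ S, ∃ n : ℕ, c0 ≤ convPow μ n s := by
  have h : ∀ s : G, ∃ n : ℕ, 0 < convPow μ n s := convPow_exists_pos hμ0 hμ1 hgen
  choose f hf using h
  rcases S.eq_empty_or_nonempty with hS | hS
  · exact ⟨1, one_pos, le_refl 1, by simp [hS]⟩
  · have hSa : S.attach.Nonempty := Finset.attach_nonempty_iff.mpr hS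
    set c1 : ℝ := S.attach.inf' hSa (fun s => convPow μ (f s.1) s.1) with hc1
    have hc1pos : 0 < c1 := by
      rw [hc1]
      rw [Finset.lt_inf'_iff]
      intro s _
      exact hf s.1
    refine ⟨min c1 1, lt_min hc1pos one_pos, min_le_right _ _, ?_⟩
    intro s hs
    refine ⟨f s, le_trans (min_le_left _ _) ?_⟩
    exact Finset.inf'_le _ (Finset.mem_attach S ⟨s, hs⟩)

private lemma list_bound (hμ0 : ∀ g, 0 ≤ μ g) (hμ1 : HasSum μ 1) {c0 : ℝ} (hc0 : 0 < c0)
    {S : Finset G} (hS : ∀ s ∈ S, ∃ n : ℕ, c0 ≤ convPow μ n s) :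
    ∀ l : List G, (∀ a ∈ l, a ∈ S) → ∃ m : ℕ, c0 ^ l.length ≤ convPow μ m l.prod := by
  intro l
  induction l with
  | nil => intro _; exact ⟨0, by simp [convPow]⟩
  | cons a l ih =>
    intro hmem
    obtain ⟨na, hna⟩ := hS a (hmem a (List.mem_cons_self))
    obtain ⟨m, hm⟩ := ih (fun b hb => hmem b (List.mem_cons_of_mem a hb))
    refine ⟨na + m, ?_⟩
    rw [List.length_cons, List.prod_cons, pow_succ']
    calc c0 * c0 ^ l.length ≤ convPow μ na a * convPow μ m l.prod :=
      mul_le_mul hna hm (pow_nonneg hc0.le _) (convPow_nonneg hμ0 _ _)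
    _ ≤ convPow μ (na + m) (a * l.prod) := convPow_mul_le hμ0 hμ1 _ _ _ _

private lemma exists_word {S : Finset G} (hSsymm : ∀ s ∈ S, s⁻¹ ∈ (S : Set G))
    (hSgen : Subgroup.closure (S : Set G) = ⊤) (g : G) :
    ∃ l : List G, (∀ a ∈ l, a ∈ (S : Set G)) ∧ l.prod = g := by
  have hg : g ∈ (Subgroup.closure (S : Set G)).toSubmonoid := by
    rw [hSgen]; trivial
  rw [Subgroup.closure_toSubmonoid] at hg
  obtain ⟨l, hl, hprod⟩ := Submonoid.exists_list_of_mem_closure hg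
  refine ⟨l, fun a ha => ?_, hprod⟩
  rcases hl a ha with h | h
  · exact h
  · have := hSsymm a⁻¹ (by simpa using h)
    simpa using this

private lemma shift_inj (M : ℕ) : Function.Injective (fun n : ℕ => M + n) := fun a b h => by
  simpa using h

private lemma summable_green (hμ0 : ∀ g, 0 ≤ μ g) (ht1 : 1 < t)
    (hs : ∀ v : G, Summable fun n : ℕ => t ^ n * convPow μ n v) (v : G) :
    Summable fun n : ℕ => convPow μ n v := by
  refine Summable.of_nonneg_of_le (fun n => convPow_nonneg hμ0 _ _) (fun n => ?_) (hs v)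
  exact le_mul_of_one_le_left (convPow_nonneg hμ0 _ _) (one_le_pow₀ ht1.le)

private lemma summable_tail (hμ0 : ∀ g, 0 ≤ μ g) (ht1 : 1 < t)
    (hs : ∀ v : G, Summable fun n : ℕ => t ^ n * convPow μ n v) (M : ℕ) (v : G) :
    Summable fun n : ℕ => convPow μ (M + n) v :=
  (summable_green hμ0 ht1 hs v).comp_injective (shift_inj M)

private lemma tail_le_green (hμ0 : ∀ g, 0 ≤ μ g) (ht1 : 1 < t)
    (hs : ∀ v : G, Summable fun n : ℕ => t ^ n * convPow μ n v) (M : ℕ) (v : G) :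
    (∑' n : ℕ, convPow μ (M + n) v) ≤ ∑' n : ℕ, convPow μ n v := by
  refine Summable.tsum_le_tsum_of_inj (fun n => M + n) (shift_inj M)
    (fun c _ => convPow_nonneg hμ0 _ _) (fun n => le_refl _)
    (summable_tail hμ0 ht1 hs M v) (summable_green hμ0 ht1 hs v)

private lemma tail_le_t (hμ0 : ∀ g, 0 ≤ μ g) (ht1 : 1 < t)
    (hs : ∀ v : G, Summable fun n : ℕ => t ^ n * convPow μ n v) (M : ℕ) (v : G) :
    (∑' n : ℕ, convPow μ (M + n) v) ≤ t⁻¹ ^ M * ∑' n : ℕ, t ^ n * convPow μ n v := by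
  have ht0 : (0:ℝ) < t := lt_trans one_pos ht1
  have hshift : Summable fun n : ℕ => t ^ (M + n) * convPow μ (M + n) v :=
    (hs v).comp_injective (shift_inj M)
  have step1 : (∑' n : ℕ, convPow μ (M + n) v)
      ≤ ∑' n : ℕ, t⁻¹ ^ M * (t ^ (M + n) * convPow μ (M + n) v) := by
    refine Summable.tsum_le_tsum (fun n => ?_) (summable_tail hμ0 ht1 hs M v) (hshift.mul_left _)
    have he : t⁻¹ ^ M * (t ^ (M + n) * convPow μ (M + n) v)
        = t ^ n * convPow μ (M + n) v := by
      rw [inv_pow, pow_add, ← mul_assoc, inv_mul_cancel_left₀ (pow_ne_zero M ht0.ne')]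
    rw [he]
    exact le_mul_of_one_le_left (convPow_nonneg hμ0 _ _) (one_le_pow₀ ht1.le)
  have step2 : (∑' n : ℕ, t ^ (M + n) * convPow μ (M + n) v)
      ≤ ∑' n : ℕ, t ^ n * convPow μ n v := by
    refine Summable.tsum_le_tsum_of_inj (fun n => M + n) (shift_inj M)
      (fun c _ => mul_nonneg (pow_nonneg ht0.le _) (convPow_nonneg hμ0 _ _))
      (fun n => le_refl _) hshift (hs v)
  calc (∑' n : ℕ, convPow μ (M + n) v)
      ≤ ∑' n : ℕ, t⁻¹ ^ M * (t ^ (M + n) * convPow μ (M + n) v) := step1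
  _ = t⁻¹ ^ M * ∑' n : ℕ, t ^ (M + n) * convPow μ (M + n) v := tsum_mul_left
  _ ≤ t⁻¹ ^ M * ∑' n : ℕ, t ^ n * convPow μ n v := by
      exact mul_le_mul_of_nonneg_left step2 (pow_nonneg (inv_nonneg.mpr ht0.le) M)

private lemma Gt_mul_bound (hμ0 : ∀ g, 0 ≤ μ g) (hμ1 : HasSum μ 1) (ht1 : 1 < t)
    (hs : ∀ v : G, Summable fun n : ℕ => t ^ n * convPow μ n v)
    {c : ℝ} (hc : 0 ≤ c) {m : ℕ} {v : G} (hm : c ≤ convPow μ m v⁻¹) :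
    (∑' n : ℕ, t ^ n * convPow μ n v) * c ≤ ∑' n : ℕ, t ^ n * convPow μ n (1 : G) := by
  have ht0 : (0:ℝ) < t := lt_trans one_pos ht1
  have hshift : Summable fun n : ℕ => t ^ (n + m) * convPow μ (n + m) (1 : G) :=
    (hs 1).comp_injective (fun a b h => by simpa using h)
  have step1 : (∑' n : ℕ, (t ^ n * convPow μ n v) * c)
      ≤ ∑' n : ℕ, t ^ (n + m) * convPow μ (n + m) (1 : G) := by
    refine Summable.tsum_le_tsum (fun n => ?_) ((hs v).mul_right c) hshift
    have h1 : convPow μ n v * c ≤ convPow μ (n + m) (1 : G) := by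
      calc convPow μ n v * c ≤ convPow μ n v * convPow μ m v⁻¹ :=
        mul_le_mul_of_nonneg_left hm (convPow_nonneg hμ0 _ _)
      _ ≤ convPow μ (n + m) (v * v⁻¹) := convPow_mul_le hμ0 hμ1 _ _ _ _
      _ = convPow μ (n + m) (1 : G) := by rw [mul_inv_cancel]
    calc t ^ n * convPow μ n v * c = t ^ n * (convPow μ n v * c) := by ring
    _ ≤ t ^ n * convPow μ (n + m) (1 : G) :=
        mul_le_mul_of_nonneg_left h1 (pow_nonneg ht0.le _)
    _ ≤ t ^ (n + m) * convPow μ (n + m) (1 : G) := by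
        refine mul_le_mul_of_nonneg_right (pow_le_pow_right₀ ht1.le (by omega))
          (convPow_nonneg hμ0 _ _)
  have step2 : (∑' n : ℕ, t ^ (n + m) * convPow μ (n + m) (1 : G))
      ≤ ∑' n : ℕ, t ^ n * convPow μ n (1 : G) := by
    refine Summable.tsum_le_tsum_of_inj (fun n => n + m) (fun a b h => by simpa using h)
      (fun c _ => mul_nonneg (pow_nonneg ht0.le _) (convPow_nonneg hμ0 _ _))
      (fun n => le_refl _) hshift (hs 1)
  calc (∑' n : ℕ, t ^ n * convPow μ n v) * c = ∑' n : ℕ, (t ^ n * convPow μ n v) * c :=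
    tsum_mul_right.symm
  _ ≤ _ := le_trans step1 step2

private lemma green_lower (hμ0 : ∀ g, 0 ≤ μ g) (hμ1 : HasSum μ 1) (ht1 : 1 < t)
    (hs : ∀ v : G, Summable fun n : ℕ => t ^ n * convPow μ n v)
    {c : ℝ} (hc : 0 ≤ c) {m : ℕ} {v : G} (hm : c ≤ convPow μ m v) :
    c * (∑' n : ℕ, convPow μ n (1 : G)) ≤ ∑' n : ℕ, convPow μ n v := by
  have hshift : Summable fun n : ℕ => convPow μ (m + n) v :=
    summable_tail hμ0 ht1 hs m v
  have step1 : (∑' n : ℕ, c * convPow μ n (1 : G)) ≤ ∑' n : ℕ, convPow μ (m + n) v := by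
    refine Summable.tsum_le_tsum (fun n => ?_) ((summable_green hμ0 ht1 hs 1).mul_left c) hshift
    calc c * convPow μ n (1 : G) ≤ convPow μ m v * convPow μ n (1 : G) :=
      mul_le_mul_of_nonneg_right hm (convPow_nonneg hμ0 _ _)
    _ ≤ convPow μ (m + n) (v * 1) := convPow_mul_le hμ0 hμ1 _ _ _ _
    _ = convPow μ (m + n) v := by rw [mul_one]
  calc c * (∑' n : ℕ, convPow μ n (1 : G)) = ∑' n : ℕ, c * convPow μ n (1 : G) :=
    tsum_mul_left.symm
  _ ≤ ∑' n : ℕ, convPow μ (m + n) v := step1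
  _ ≤ ∑' n : ℕ, convPow μ n v := tail_le_green hμ0 ht1 hs m v

private lemma tail_mono_one (hμ0 : ∀ g, 0 ≤ μ g) (ht1 : 1 < t)
    (hs : ∀ v : G, Summable fun n : ℕ => t ^ n * convPow μ n v) {M : ℕ} (hM : 1 ≤ M)
    (v : G) :
    (∑' n : ℕ, convPow μ (M + n) v) ≤ ∑' n : ℕ, convPow μ (1 + n) v := by
  refine Summable.tsum_le_tsum_of_inj (fun n => (M - 1) + n)
    (fun a b h => by simpa using h) (fun c _ => convPow_nonneg hμ0 _ _)
    (fun n => ?_) (summable_tail hμ0 ht1 hs M v) (summable_tail hμ0 ht1 hs 1 v)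
  have he : 1 + ((M - 1) + n) = M + n := by omega
  simp only [he]
  exact le_refl _

private lemma tail_one_eq (hμ0 : ∀ g, 0 ≤ μ g) (ht1 : 1 < t)
    (hs : ∀ v : G, Summable fun n : ℕ => t ^ n * convPow μ n v) :
    (∑' n : ℕ, convPow μ (1 + n) (1 : G)) = (∑' n : ℕ, convPow μ n (1 : G)) - 1 := by
  have h := Summable.tsum_eq_zero_add (summable_green hμ0 ht1 hs (1 : G))
  have h0 : convPow μ 0 (1 : G) = 1 := by simp [convPow]
  have hc : (∑' n : ℕ, convPow μ (n + 1) (1 : G)) = ∑' n : ℕ, convPow μ (1 + n) (1 : G) :=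
    tsum_congr (fun n => by rw [add_comm])
  rw [h0, hc] at h
  linarith

private lemma key_arith {t K c0 D : ℝ} {d M : ℕ}
    (ht : 1 < t) (hK1 : 1 ≤ K) (hc0 : 0 < c0)
    (hD : K / c0 ^ 2 ≤ t ^ D)
    (hd : 1 ≤ d) :
    (t⁻¹) ^ M * K ≤ t⁻¹ ^ ((M : ℝ) - D * d) * (c0 ^ d * c0 ^ d) := by
  have ht0 : (0:ℝ) < t := lt_trans one_pos ht
  have hKcore : K ≤ t ^ (D * (d:ℝ)) * (c0 ^ d * c0 ^ d) := by
    have h1 : t ^ (D * (d:ℝ)) = (t ^ D) ^ d := by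
      rw [Real.rpow_mul ht0.le, Real.rpow_natCast]
    have h2 : (K / c0 ^ 2) ^ d ≤ (t ^ D) ^ d :=
      pow_le_pow_left₀ (div_nonneg (by linarith) (by positivity)) hD d
    have h3 : (K / c0 ^ 2) ^ d * (c0 ^ d * c0 ^ d) = K ^ d := by
      rw [← mul_pow, ← sq, ← mul_pow, div_mul_cancel₀ _ (by positivity : c0 ^ 2 ≠ 0)]
    have h4 : K ≤ K ^ d := le_self_pow₀ hK1 (by omega)
    calc K ≤ K ^ d := h4
    _ = (K / c0 ^ 2) ^ d * (c0 ^ d * c0 ^ d) := h3.symm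
    _ ≤ (t ^ D) ^ d * (c0 ^ d * c0 ^ d) :=
        mul_le_mul_of_nonneg_right h2 (by positivity)
    _ = t ^ (D * (d:ℝ)) * (c0 ^ d * c0 ^ d) := by rw [h1]
  have e1 : (t⁻¹) ^ M = t ^ (-(M:ℝ)) := by
    rw [← Real.rpow_natCast t⁻¹ M, Real.inv_rpow ht0.le, ← Real.rpow_neg ht0.le]
  have e2 : t⁻¹ ^ ((M:ℝ) - D * d) = t ^ (-(M:ℝ)) * t ^ (D * (d:ℝ)) := by
    rw [Real.inv_rpow ht0.le, ← Real.rpow_neg ht0.le, neg_sub,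
      show D * (d:ℝ) - (M:ℝ) = -(M:ℝ) + D * (d:ℝ) by ring, Real.rpow_add ht0]
  rw [e1, e2, mul_assoc]
  exact mul_le_mul_of_nonneg_left hKcore (Real.rpow_nonneg ht0.le _)

end Aux

/-- if the spectral radius of the walk is `< 1`, then the total weight of
admissible trajectories from `x` to `y` of length at least `M` is at most
`φ^(M - D·d(x,y)) · 𝒢(x,y)` for some `0 < φ < 1` and `D > 0`. -/
theorem stmt5 {G : Type*} [Group G] [Countable G]
    (S : Finset G) (hSsymm : ∀ s ∈ S, s⁻¹ ∈ (S : Set G))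
    (hSgen : Subgroup.closure (S : Set G) = ⊤)
    (μ : G → ℝ) (hμ0 : ∀ g, 0 ≤ μ g) (hμ1 : HasSum μ 1)
    (hgen : Subsemigroup.closure {g : G | 0 < μ g} = ⊤)
    (hrad : ∃ t : ℝ, 1 < t ∧ ∀ x y : G,
      Summable fun n : ℕ => t ^ n * convPow μ n (x⁻¹ * y)) :
    ∃ φ D : ℝ, 0 < φ ∧ φ < 1 ∧ 0 < D ∧ ∀ x y : G, ∀ M : ℕ,
      (∑' n : ℕ, convPow μ (M + n) (x⁻¹ * y)) ≤
        φ ^ ((M : ℝ) - D * (wordDist (S : Set G) x y : ℝ)) * green μ x y := by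
  obtain ⟨t, ht1, hrad⟩ := hrad
  have ht0 : (0:ℝ) < t := lt_trans one_pos ht1
  have hs : ∀ v : G, Summable fun n : ℕ => t ^ n * convPow μ n v := by
    intro v
    have := hrad 1 v
    simpa using this
  -- constants
  obtain ⟨c0, hc00, hc01, hc0S⟩ := exists_c0 hμ0 hμ1 hgen S
  set g : ℝ := ∑' n : ℕ, convPow μ n (1 : G) with hg_def
  set K : ℝ := ∑' n : ℕ, t ^ n * convPow μ n (1 : G) with hK_def
  have hg1 : 1 ≤ g := by
    have h0 : convPow μ 0 (1 : G) = 1 := by simp [convPow]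
    have := Summable.le_tsum (summable_green hμ0 ht1 hs (1 : G)) 0
      (fun j _ => convPow_nonneg hμ0 _ _)
    rw [h0] at this
    exact this
  have hgK : g ≤ K := by
    refine Summable.tsum_le_tsum (fun n => ?_) (summable_green hμ0 ht1 hs (1 : G)) (hs 1)
    exact le_mul_of_one_le_left (convPow_nonneg hμ0 _ _) (one_le_pow₀ ht1.le)
  have hK1 : 1 ≤ K := le_trans hg1 hgK
  have hg0 : 0 < g := lt_of_lt_of_le one_pos hg1
  -- threshold M2 for the d = 0 case
  obtain ⟨M1, hM1⟩ := pow_unbounded_of_one_lt K (by linarith : 1 < (1 + t) / 2)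
  set M2 : ℕ := M1 + 1 with hM2_def
  have hM2pos : 0 < M2 := Nat.succ_pos _
  have hM2 : ∀ M : ℕ, M2 ≤ M → K ≤ ((1 + t) / 2) ^ M := by
    intro M hM
    calc K ≤ ((1 + t) / 2) ^ M1 := hM1.le
    _ ≤ ((1 + t) / 2) ^ M := pow_le_pow_right₀ (by linarith) (by omega)
  -- the base φ
  set β : ℝ := 1 - 1 / (2 * g) with hβ_def
  have hβhalf : (1:ℝ)/2 ≤ β := by
    have h2g : (2:ℝ) ≤ 2 * g := by linarith
    have : 1 / (2 * g) ≤ 1 / 2 := by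
      apply one_div_le_one_div_of_le <;> linarith
    rw [hβ_def]; linarith
  have hβ0 : 0 < β := lt_of_lt_of_le (by norm_num) hβhalf
  have hβ1 : β < 1 := by
    rw [hβ_def]
    have : 0 < 1 / (2 * g) := by positivity
    linarith
  set φ : ℝ := max ((1 + t) / (2 * t)) (β ^ ((M2:ℝ))⁻¹) with hφ_def
  have hφ0pos : 0 < (1 + t) / (2 * t) := by positivity
  have hφpos : 0 < φ := lt_of_lt_of_le hφ0pos (le_max_left _ _)
  have hφlt1 : φ < 1 := by
    apply max_lt
    · rw [div_lt_one (by linarith)]; linarith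
    · exact Real.rpow_lt_one hβ0.le hβ1 (by positivity)
  have hφinv : t⁻¹ ≤ φ := by
    refine le_trans ?_ (le_max_left _ _)
    rw [inv_eq_one_div, div_le_div_iff₀ ht0 (by linarith : (0:ℝ) < 2 * t)]
    nlinarith
  -- the constant D
  set D : ℝ := max 1 (Real.logb t (K / c0 ^ 2)) with hD_def
  have hD1 : (1:ℝ) ≤ D := le_max_left _ _
  have hDpos : 0 < D := lt_of_lt_of_le one_pos hD1
  have hDt : K / c0 ^ 2 ≤ t ^ D := by
    have hX : (0:ℝ) < K / c0 ^ 2 := by positivity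
    calc K / c0 ^ 2 = t ^ Real.logb t (K / c0 ^ 2) :=
      (Real.rpow_logb ht0 ht1.ne' hX).symm
    _ ≤ t ^ D := by
      apply Real.rpow_le_rpow_left_iff ht1 |>.mpr
      exact le_max_right _ _
  refine ⟨φ, D, hφpos, hφlt1, hDpos, ?_⟩
  intro x y M
  set v : G := x⁻¹ * y with hv_def
  set d : ℕ := wordDist (S : Set G) x y with hd_def
  have hgreen : green μ x y = ∑' n : ℕ, convPow μ n v := rfl
  have hgreen_nonneg : 0 ≤ ∑' n : ℕ, convPow μ n v :=
    tsum_nonneg fun n => convPow_nonneg hμ0 _ _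
  -- a word of length d for v
  have hword : ∃ l : List G, l.length = d ∧ (∀ a ∈ l, a ∈ (S : Set G)) ∧ l.prod = v := by
    have hne : {n : ℕ | ∃ l : List G, l.length = n ∧ (∀ a ∈ l, a ∈ (S : Set G)) ∧
        l.prod = x⁻¹ * y}.Nonempty := by
      obtain ⟨l, hl1, hl2⟩ := exists_word hSsymm hSgen (x⁻¹ * y)
      exact ⟨l.length, l, rfl, hl1, hl2⟩
    have := Nat.sInf_mem hne
    exact this
  obtain ⟨l, hlen, hlS, hlprod⟩ := hword
  -- lower bound for p^{m'}(v) and p^{m}(v⁻¹)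
  have hm' : ∃ m' : ℕ, c0 ^ d ≤ convPow μ m' v := by
    obtain ⟨m', hm'⟩ := list_bound hμ0 hμ1 hc00 hc0S l (fun a ha => hlS a ha)
    rw [hlen, hlprod] at hm'
    exact ⟨m', hm'⟩
  have hm : ∃ m : ℕ, c0 ^ d ≤ convPow μ m v⁻¹ := by
    set l2 : List G := (l.map fun a => a⁻¹).reverse with hl2_def
    have hl2len : l2.length = d := by
      rw [hl2_def, List.length_reverse, List.length_map, hlen]
    have hl2S : ∀ a ∈ l2, a ∈ S := by
      intro a ha
      rw [hl2_def, List.mem_reverse, List.mem_map] at ha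
      obtain ⟨b, hb, rfl⟩ := ha
      exact hSsymm b (hlS b hb)
    have hl2prod : l2.prod = v⁻¹ := by
      rw [hl2_def, ← List.prod_inv_reverse, hlprod]
    obtain ⟨m, hm⟩ := list_bound hμ0 hμ1 hc00 hc0S l2 hl2S
    rw [hl2len, hl2prod] at hm
    exact ⟨m, hm⟩
  obtain ⟨m', hm'⟩ := hm'
  obtain ⟨m, hm⟩ := hm
  have hc0d : (0:ℝ) < c0 ^ d := pow_pos hc00 d
  have hGlow : c0 ^ d * g ≤ ∑' n : ℕ, convPow μ n v :=
    green_lower hμ0 hμ1 ht1 hs hc0d.le hm'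
  rw [hgreen]
  by_cases hcase : (M:ℝ) ≤ D * d
  -- trivial case: exponent is nonpositive
  · have h1 : (1:ℝ) ≤ φ ^ ((M : ℝ) - D * d) := by
      have : φ ^ ((M : ℝ) - D * d) ≥ φ ^ (0:ℝ) :=
        Real.rpow_le_rpow_of_exponent_ge hφpos hφlt1.le (by linarith)
      rwa [Real.rpow_zero] at this
    calc (∑' n : ℕ, convPow μ (M + n) v) ≤ ∑' n : ℕ, convPow μ n v :=
      tail_le_green hμ0 ht1 hs M v
    _ ≤ φ ^ ((M : ℝ) - D * d) * ∑' n : ℕ, convPow μ n v :=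
      le_mul_of_one_le_left hgreen_nonneg h1
  · push_neg at hcase
    have hexp_nonneg : (0:ℝ) ≤ (M:ℝ) - D * d := le_of_lt (by linarith)
    by_cases hd0 : d = 0
    -- d = 0 : v = 1
    · have hv1 : v = 1 := by
        rw [hd0] at hlen
        have : l = [] := List.length_eq_zero_iff.mp hlen
        rw [this] at hlprod
        simpa using hlprod.symm
      have hM1pos : 1 ≤ M := by
        have h0 : (0:ℝ) ≤ D * d := mul_nonneg hDpos.le (Nat.cast_nonneg d)
        have h1 : (0:ℝ) < (M:ℝ) := lt_of_le_of_lt h0 hcase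
        have h2 : 0 < M := by exact_mod_cast h1
        omega
      have hφM : φ ^ ((M : ℝ) - D * d) = φ ^ M := by
        rw [hd0]
        push_cast
        rw [mul_zero, sub_zero, Real.rpow_natCast]
      rw [hv1, hφM]
      by_cases hMM2 : M2 ≤ M
      -- large M: geometric decay
      · have step1 : (∑' n : ℕ, convPow μ (M + n) (1:G)) ≤ t⁻¹ ^ M * K :=
          tail_le_t hμ0 ht1 hs M 1
        have step2 : t⁻¹ ^ M * K ≤ φ ^ M := by
          have h1 : K ≤ ((1 + t) / 2) ^ M := hM2 M hMM2
          have h2 : ((1 + t) / 2) ^ M = ((1 + t) / (2 * t)) ^ M * t ^ M := by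
            rw [← mul_pow]
            congr 1
            field_simp
          have h3 : t⁻¹ ^ M * K ≤ t⁻¹ ^ M * (((1 + t) / (2 * t)) ^ M * t ^ M) := by
            rw [← h2]
            exact mul_le_mul_of_nonneg_left h1 (by positivity)
          have h4 : t⁻¹ ^ M * (((1 + t) / (2 * t)) ^ M * t ^ M)
              = ((1 + t) / (2 * t)) ^ M := by
            rw [mul_comm (t⁻¹ ^ M) _, mul_assoc, ← mul_pow, mul_inv_cancel₀ ht0.ne',
              one_pow, mul_one]
          have h5 : ((1 + t) / (2 * t)) ^ M ≤ φ ^ M :=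
            pow_le_pow_left₀ hφ0pos.le (le_max_left _ _) M
          linarith
        calc (∑' n : ℕ, convPow μ (M + n) (1:G)) ≤ t⁻¹ ^ M * K := step1
        _ ≤ φ ^ M := step2
        _ ≤ φ ^ M * ∑' n : ℕ, convPow μ n (1:G) := by
            exact le_mul_of_one_le_right (by positivity) hg1
      -- small M: use the loss of the mass of the zeroth step
      · push_neg at hMM2
        have step1 : (∑' n : ℕ, convPow μ (M + n) (1:G)) ≤ g - 1 := by
          calc (∑' n : ℕ, convPow μ (M + n) (1:G))
              ≤ ∑' n : ℕ, convPow μ (1 + n) (1:G) := tail_mono_one hμ0 ht1 hs hM1pos 1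
          _ = g - 1 := tail_one_eq hμ0 ht1 hs
        have hβφ : β ≤ φ ^ M := by
          have h1 : β ^ ((M2:ℝ))⁻¹ ≤ φ := le_max_right _ _
          have h2 : (β ^ ((M2:ℝ))⁻¹) ^ M ≤ φ ^ M :=
            pow_le_pow_left₀ (Real.rpow_nonneg hβ0.le _) h1 M
          have h3 : (β ^ ((M2:ℝ))⁻¹) ^ M = β ^ (((M2:ℝ))⁻¹ * M) := by
            rw [← Real.rpow_natCast (β ^ ((M2:ℝ))⁻¹) M, ← Real.rpow_mul hβ0.le]
          have h4 : β ≤ β ^ (((M2:ℝ))⁻¹ * M) := by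
            have hle1 : ((M2:ℝ))⁻¹ * M ≤ 1 := by
              rw [inv_mul_le_iff₀ (by positivity : (0:ℝ) < (M2:ℝ)), mul_one]
              exact_mod_cast hMM2.le
            have := Real.rpow_le_rpow_of_exponent_ge hβ0 hβ1.le hle1
            rwa [Real.rpow_one] at this
          exact le_trans (le_trans h4 h3.symm.le) h2
        have hfin : g - 1 ≤ φ ^ M * g := by
          have h1 : β * g ≤ φ ^ M * g := mul_le_mul_of_nonneg_right hβφ hg0.le
          have h2 : β * g = g - 1/2 := by
            rw [hβ_def]
            field_simp
          have h3 : g - 1 ≤ g - 1/2 := sub_le_sub_left (by norm_num : (1:ℝ)/2 ≤ 1) g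
          exact le_trans h3 (le_trans (le_of_eq h2.symm) h1)
        calc (∑' n : ℕ, convPow μ (M + n) (1:G)) ≤ g - 1 := step1
        _ ≤ φ ^ M * g := hfin
    -- d ≥ 1 : full chain
    · have hd1 : 1 ≤ d := Nat.one_le_iff_ne_zero.mpr hd0
      have step1 : (∑' n : ℕ, convPow μ (M + n) v)
          ≤ t⁻¹ ^ M * ∑' n : ℕ, t ^ n * convPow μ n v := tail_le_t hμ0 ht1 hs M v
      have step2 : (∑' n : ℕ, t ^ n * convPow μ n v) ≤ K / c0 ^ d := by
        rw [le_div_iff₀ hc0d]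
        exact Gt_mul_bound hμ0 hμ1 ht1 hs hc0d.le hm
      have step3 : t⁻¹ ^ M * (K / c0 ^ d)
          ≤ t⁻¹ ^ ((M : ℝ) - D * d) * c0 ^ d := by
        have hk := key_arith ht1 hK1 hc00 hDt hd1 (D := D) (M := M)
        have h1 : t⁻¹ ^ M * (K / c0 ^ d) = (t⁻¹ ^ M * K) / c0 ^ d := by ring
        have h2 : t⁻¹ ^ ((M : ℝ) - D * d) * (c0 ^ d * c0 ^ d) / c0 ^ d
            = t⁻¹ ^ ((M : ℝ) - D * d) * c0 ^ d := by
          field_simp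
        rw [h1, ← h2]
        exact div_le_div_of_nonneg_right hk hc0d.le
      have step4 : t⁻¹ ^ ((M : ℝ) - D * d) ≤ φ ^ ((M : ℝ) - D * d) :=
        Real.rpow_le_rpow (inv_nonneg.mpr ht0.le) hφinv hexp_nonneg
      have step5 : c0 ^ d ≤ ∑' n : ℕ, convPow μ n v := by
        calc c0 ^ d = c0 ^ d * 1 := (mul_one _).symm
        _ ≤ c0 ^ d * g := mul_le_mul_of_nonneg_left hg1 hc0d.le
        _ ≤ _ := hGlow
      calc (∑' n : ℕ, convPow μ (M + n) v)
          ≤ t⁻¹ ^ M * ∑' n : ℕ, t ^ n * convPow μ n v := step1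
      _ ≤ t⁻¹ ^ M * (K / c0 ^ d) :=
          mul_le_mul_of_nonneg_left step2 (by positivity)
      _ ≤ t⁻¹ ^ ((M : ℝ) - D * d) * c0 ^ d := step3
      _ ≤ φ ^ ((M : ℝ) - D * d) * c0 ^ d :=
          mul_le_mul_of_nonneg_right step4 hc0d.le
      _ ≤ φ ^ ((M : ℝ) - D * d) * ∑' n : ℕ, convPow μ n v :=
          mul_le_mul_of_nonneg_left step5 (Real.rpow_nonneg hφpos.le _)
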